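/- Let C_i ⊆ H, i = 1,…,m, be closed convex sets in a real Hilbert space with C := ⋂_i C_i ≠ ∅. If the interior of C is nonempty, then the family {C_i} is boundedly regular: for every bounded sequence {x^k}, max_i d(x^k, C_i) → 0 implies d(x^k, C) → 0. -/

import Mathlib

open Filter

theorem interior_nonempty_implies_boundedlyRegular
    {H : Type*} [NormedAddCommGroup H] [InnerProductSpace ℝ H] [CompleteSpace H]
    {m : ℕ} [NeZero m] (C : Fin m → Set H)
    (hclosed : ∀ i, IsClosed (C i)) (hconv : ∀ i, Convex ℝ (C i))
    (hint : (interior (⋂ i, C i)).Nonempty) :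
    ∀ x : ℕ → H, Bornology.IsBounded (Set.range x) →
      Tendsto (fun k =>
        Finset.univ.sup' Finset.univ_nonempty (fun i => Metric.infDist (x k) (C i)))
        atTop (nhds 0) →
      Tendsto (fun k => Metric.infDist (x k) (⋂ i, C i)) atTop (nhds 0) := by
  intro x hbd htend
  obtain ⟨c, hc⟩ := hint
  rw [mem_interior_iff_mem_nhds] at hc
  obtain ⟨ρ, hρ, hball⟩ := Metric.mem_nhds_iff.mp hc
  obtain ⟨r, hr⟩ := hbd.subset_closedBall c
  set M : ℝ := max r 1 with hMdef
  have hM1 : (1:ℝ) ≤ M := le_max_right _ _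
  have hM0 : (0:ℝ) < M := lt_of_lt_of_le one_pos hM1
  have hMx : ∀ k, ‖x k - c‖ ≤ M := by
    intro k
    have : x k ∈ Metric.closedBall c r := hr ⟨k, rfl⟩
    rw [Metric.mem_closedBall, dist_eq_norm] at this
    exact this.trans (le_max_left _ _)
  have hcC : ∀ i, c ∈ C i := fun i =>
    (Set.mem_iInter.mp (hball (Metric.mem_ball_self hρ))) i
  set f : ℕ → ℝ := fun k =>
    Finset.univ.sup' Finset.univ_nonempty (fun i => Metric.infDist (x k) (C i)) with hfdef
  -- Key estimate
  have key : ∀ k (ε : ℝ), f k < ε → Metric.infDist (x k) (⋂ i, C i) ≤ ε * M / ρ := by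
    intro k ε hε
    have hε0 : 0 < ε := by
      refine lt_of_le_of_lt ?_ hε
      have i0 : Fin m := ⟨0, Nat.pos_of_ne_zero (NeZero.ne m)⟩
      refine le_trans Metric.infDist_nonneg (Finset.le_sup' (fun i => Metric.infDist (x k) (C i)) (Finset.mem_univ i0))
    have hdi : ∀ i, Metric.infDist (x k) (C i) < ε := fun i =>
      lt_of_le_of_lt (Finset.le_sup' (fun j => Metric.infDist (x k) (C j)) (Finset.mem_univ i)) hε
    choose z hzC hzd using fun i =>
      (Metric.infDist_lt_iff ⟨c, hcC i⟩).mp (hdi i)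
    set t : ℝ := ρ / (ρ + ε) with htdef
    have hρε : 0 < ρ + ε := by linarith
    have ht0 : 0 < t := div_pos hρ hρε
    have ht1 : t < 1 := (div_lt_one hρε).mpr (by linarith)
    have h1t : 1 - t = ε / (ρ + ε) := by
      rw [htdef]; field_simp; ring
    set y : H := c + t • (x k - c) with hydef
    have hyC : y ∈ ⋂ i, C i := by
      rw [Set.mem_iInter]
      intro i
      set w : H := c + (t / (1 - t)) • (x k - z i) with hwdef
      have hwball : w ∈ Metric.ball c ρ := by
        rw [Metric.mem_ball, dist_eq_norm]
        have : w - c = (t / (1 - t)) • (x k - z i) := by rw [hwdef]; abel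
        rw [this, norm_smul]
        have hco : t / (1 - t) = ρ / ε := by
          rw [h1t, htdef]
          field_simp
        rw [hco, Real.norm_eq_abs, abs_of_pos (div_pos hρ hε0)]
        have hzd' : ‖x k - z i‖ < ε := by
          rw [← dist_eq_norm]; exact hzd i
        calc ρ / ε * ‖x k - z i‖ < ρ / ε * ε :=
              mul_lt_mul_of_pos_left hzd' (div_pos hρ hε0)
          _ = ρ := by field_simp
      have hwC : w ∈ C i := (Set.mem_iInter.mp (hball hwball)) i
      have hyy : y = (1 - t) • w + t • z i := by
        rw [hydef, hwdef, smul_add, smul_smul]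
        have h1t0 : (1 : ℝ) - t ≠ 0 := by linarith
        rw [mul_div_cancel₀ _ h1t0]
        rw [smul_sub, smul_sub]
        module
      rw [hyy]
      exact (hconv i) hwC (hzC i) (by linarith) (le_of_lt ht0) (by ring)
    have hdist : dist (x k) y ≤ ε * M / ρ := by
      rw [dist_eq_norm]
      have : x k - y = (1 - t) • (x k - c) := by
        rw [hydef]; rw [sub_smul, one_smul, smul_sub]; abel
      rw [this, norm_smul, Real.norm_eq_abs, abs_of_pos (by linarith : (0:ℝ) < 1 - t), h1t]
      calc ε / (ρ + ε) * ‖x k - c‖ ≤ ε / (ρ + ε) * M := by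
            exact mul_le_mul_of_nonneg_left (hMx k) (le_of_lt (div_pos hε0 hρε))
        _ ≤ ε * M / ρ := by
            rw [div_mul_eq_mul_div]
            gcongr
            linarith
    exact le_trans (Metric.infDist_le_dist_of_mem hyC) hdist
  have hle : ∀ k, Metric.infDist (x k) (⋂ i, C i) ≤ f k * M / ρ := by
    intro k
    refine le_of_forall_pos_le_add ?_
    intro δ hδ
    have hεlt : f k < f k + δ * ρ / M := by
      have : 0 < δ * ρ / M := div_pos (mul_pos hδ hρ) hM0
      linarith
    have := key k (f k + δ * ρ / M) hεlt
    calc Metric.infDist (x k) (⋂ i, C i) ≤ (f k + δ * ρ / M) * M / ρ := this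
      _ = f k * M / ρ + δ := by field_simp
  have hupper : Tendsto (fun k => f k * M / ρ) atTop (nhds 0) := by
    have := (htend.mul_const M).div_const ρ
    simpa using this
  exact squeeze_zero (fun k => Metric.infDist_nonneg) hle hupper
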